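/- There exists no real number r such that for both k = 0 and k = 1 the 4×4 symmetric matrix [[1, 0, ρ₁, ρ₀],[0, 1, 1, (-1)ᵏ],[ρ₁, 1, 1, r],[ρ₀, (-1)ᵏ, r, 1]] is positive semidefinite, for any real ρ₀, ρ₁; moreover, positive semidefiniteness for a fixed k forces ρ₀ = ρ₁ = 0 and r = (-1)ᵏ. -/

import Mathlib

lemma psd_key (ρ₀ ρ₁ r ε : ℝ) (hε : ε ^ 2 = 1)
    (h : (!![(1 : ℝ), 0, ρ₁, ρ₀;
          0, 1, 1, ε;
          ρ₁, 1, 1, r;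
          ρ₀, ε, r, 1]).PosSemidef) :
    ρ₀ = 0 ∧ ρ₁ = 0 ∧ r = ε := by
  have hq : ∀ a b c d : ℝ,
      0 ≤ a^2 + b^2 + c^2 + d^2 + 2*ρ₁*a*c + 2*ρ₀*a*d + 2*b*c + 2*ε*b*d + 2*r*c*d := by
    intro a b c d
    have := h.dotProduct_mulVec_nonneg ![a, b, c, d]
    simp [dotProduct, Matrix.mulVec, Fin.sum_univ_four, Matrix.cons_val_zero,
      Matrix.cons_val_one, Matrix.head_cons, Matrix.cons_val_two, Matrix.cons_val_three,
      Matrix.tail_cons, Matrix.head_fin_const] at this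
    nlinarith [this]
  have h1 : r = ε := by
    have := hq 0 1 (-1) (-(ε - r))
    nlinarith [sq_nonneg (ε - r)]
  have h2 : ρ₁ = 0 := by
    have := hq ρ₁ 1 (-1) 0
    nlinarith [sq_nonneg ρ₁]
  have h3 : ρ₀ = 0 := by
    have := hq (ε*ρ₀) 1 0 (-ε)
    nlinarith [sq_nonneg ρ₀, sq_nonneg ε]
  exact ⟨h3, h2, h1⟩

theorem stmt_14 :
    (∀ ρ₀ ρ₁ : ℝ, ¬ ∃ r : ℝ, ∀ k : Fin 2,
      (!![(1 : ℝ), 0, ρ₁, ρ₀;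
          0, 1, 1, (-1 : ℝ) ^ (k : ℕ);
          ρ₁, 1, 1, r;
          ρ₀, (-1 : ℝ) ^ (k : ℕ), r, 1]).PosSemidef) ∧
    (∀ ρ₀ ρ₁ r : ℝ, ∀ k : Fin 2,
      (!![(1 : ℝ), 0, ρ₁, ρ₀;
          0, 1, 1, (-1 : ℝ) ^ (k : ℕ);
          ρ₁, 1, 1, r;
          ρ₀, (-1 : ℝ) ^ (k : ℕ), r, 1]).PosSemidef →
        ρ₀ = 0 ∧ ρ₁ = 0 ∧ r = (-1 : ℝ) ^ (k : ℕ)) := by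
  have hε : ∀ k : Fin 2, ((-1 : ℝ) ^ (k : ℕ)) ^ 2 = 1 := by
    intro k
    rw [← pow_mul, mul_comm, pow_mul]
    simp
  constructor
  · intro ρ₀ ρ₁ ⟨r, hr⟩
    have h0 := psd_key ρ₀ ρ₁ r _ (hε 0) (hr 0)
    have h1 := psd_key ρ₀ ρ₁ r _ (hε 1) (hr 1)
    have := h0.2.2
    have := h1.2.2
    norm_num at *
    linarith
  · intro ρ₀ ρ₁ r k hk
    exact psd_key ρ₀ ρ₁ r _ (hε k) hk
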